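/- Let A be a real m×n matrix, b ∈ ℝ^m, c ∈ ℝ^n with c_i > 0 for all i, and let x ∈ ℝ^n satisfy x_i > 0 for all i and A x = b. Let W = diag(x_1/c_1, …, x_n/c_n), L = A W Aᵀ, suppose L is invertible, and let q = W Aᵀ L⁻¹ b. Then the energy of q is bounded by the cost of x: Σ_{i=1}^n c_i q_i² / x_i ≤ cᵀx. -/

import Mathlib

open Matrix

/-- the energy of the Physarum direction q is bounded by the cost
of the current feasible point x. -/
theorem physarum_energy_le_cost
    (m n : ℕ) (A : Matrix (Fin m) (Fin n) ℝ) (b : Fin m → ℝ)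
    (c x : Fin n → ℝ) (hc : ∀ i, 0 < c i) (hx : ∀ i, 0 < x i)
    (hxfeas : A.mulVec x = b)
    (W : Matrix (Fin n) (Fin n) ℝ) (hW : W = Matrix.diagonal fun i => x i / c i)
    (L : Matrix (Fin m) (Fin m) ℝ) (hL : L = A * W * Aᵀ)
    (hLinv : IsUnit L)
    (q : Fin n → ℝ) (hq : q = W.mulVec (Aᵀ.mulVec (L⁻¹.mulVec b))) :
    (∑ i, c i * q i ^ 2 / x i) ≤ c ⬝ᵥ x := by
  set y := L⁻¹.mulVec b with hy
  set p := Aᵀ.mulVec y with hp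
  have hqi : ∀ i, q i = (x i / c i) * p i := by
    intro i
    rw [hq, hW]
    simp [Matrix.mulVec_diagonal, hp, hy]
  have hdet : IsUnit L.det := (Matrix.isUnit_iff_isUnit_det L).mp hLinv
  have hLL : L * L⁻¹ = 1 := Matrix.mul_nonsing_inv L hdet
  have hE : (∑ i, c i * q i ^ 2 / x i) = ∑ i, (x i / c i) * p i ^ 2 := by
    refine Finset.sum_congr rfl fun i _ => ?_
    have h1 : c i ≠ 0 := (hc i).ne'
    have h2 : x i ≠ 0 := (hx i).ne'
    rw [hqi i]
    field_simp
  have hAWp : A.mulVec (W.mulVec p) = b := by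
    rw [hp, hy, Matrix.mulVec_mulVec, Matrix.mulVec_mulVec, Matrix.mulVec_mulVec,
      ← hL, hLL, Matrix.one_mulVec]
  have hS1 : (∑ i, (x i / c i) * p i ^ 2) = y ⬝ᵥ b := by
    have h1 : (∑ i, (x i / c i) * p i ^ 2) = p ⬝ᵥ (W.mulVec p) := by
      rw [hW]
      simp only [dotProduct, Matrix.mulVec_diagonal]
      exact Finset.sum_congr rfl fun i _ => by ring
    calc (∑ i, (x i / c i) * p i ^ 2) = p ⬝ᵥ (W.mulVec p) := h1
      _ = (y ᵥ* A) ⬝ᵥ (W.mulVec p) := by rw [hp, Matrix.mulVec_transpose]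
      _ = y ⬝ᵥ (A.mulVec (W.mulVec p)) := (Matrix.dotProduct_mulVec y A _).symm
      _ = y ⬝ᵥ b := by rw [hAWp]
  have hS2 : (∑ i, x i * p i) = y ⬝ᵥ b := by
    calc (∑ i, x i * p i) = x ⬝ᵥ p := rfl
      _ = x ⬝ᵥ (Aᵀ.mulVec y) := by rw [hp]
      _ = (x ᵥ* Aᵀ) ⬝ᵥ y := Matrix.dotProduct_mulVec x Aᵀ y
      _ = (A.mulVec x) ⬝ᵥ y := by rw [Matrix.vecMul_transpose]
      _ = b ⬝ᵥ y := by rw [hxfeas]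
      _ = y ⬝ᵥ b := dotProduct_comm b y
  -- Cauchy–Schwarz
  have hCS : (∑ i, x i * p i) ^ 2 ≤ (∑ i, (x i / c i) * p i ^ 2) * (∑ i, x i * c i) := by
    have key := Finset.sum_mul_sq_le_sq_mul_sq Finset.univ
      (fun i => Real.sqrt (x i / c i) * p i) (fun i => Real.sqrt (x i * c i))
    have e1 : ∀ i : Fin n, (Real.sqrt (x i / c i) * p i) * Real.sqrt (x i * c i) = x i * p i := by
      intro i
      have h1 : (0:ℝ) ≤ x i / c i := div_nonneg (hx i).le (hc i).le
      have hcne : c i ≠ 0 := (hc i).ne'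
      have h2 : (x i / c i) * (x i * c i) = x i ^ 2 := by
        field_simp
      calc (Real.sqrt (x i / c i) * p i) * Real.sqrt (x i * c i)
          = Real.sqrt ((x i / c i) * (x i * c i)) * p i := by
            rw [Real.sqrt_mul h1]; ring
        _ = x i * p i := by rw [h2, Real.sqrt_sq (hx i).le]
    have e2 : ∀ i : Fin n, (Real.sqrt (x i / c i) * p i) ^ 2 = (x i / c i) * p i ^ 2 := by
      intro i
      rw [mul_pow, Real.sq_sqrt (div_nonneg (hx i).le (hc i).le)]
    have e3 : ∀ i : Fin n, (Real.sqrt (x i * c i)) ^ 2 = x i * c i := by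
      intro i
      exact Real.sq_sqrt (mul_nonneg (hx i).le (hc i).le)
    simpa only [e1, e2, e3] using key
  have hEnn : 0 ≤ ∑ i, (x i / c i) * p i ^ 2 :=
    Finset.sum_nonneg fun i _ => mul_nonneg (div_nonneg (hx i).le (hc i).le) (sq_nonneg _)
  have hcx : c ⬝ᵥ x = ∑ i, x i * c i := by
    simp [dotProduct, mul_comm]
  have hcnn : 0 ≤ ∑ i, x i * c i :=
    Finset.sum_nonneg fun i _ => mul_nonneg (hx i).le (hc i).le
  rw [hE, hcx]
  nlinarith [hCS, hS1, hS2, hEnn, hcnn]
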